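/- For B = I_p + c·off(A) with c ∈ [0,1] and A any p×p real matrix, the maximum over permutation matrices P of tr(P B̃) equals Σᵢ 1/(c² Σ_{j≠i} Aᵢⱼ² + 1), where B̃ᵢⱼ = Bᵢⱼ²/Σₖ Bᵢₖ², provided Aᵢⱼ² ≤ 1 for all i ≠ j. -/
import Mathlib


open Matrix Finset

def permMat (p : ℕ) (σ : Equiv.Perm (Fin p)) : Matrix (Fin p) (Fin p) ℝ :=
  Matrix.of fun i j => if σ j = i then 1 else 0

def PJDset (p : ℕ) : Set (Matrix (Fin p) (Fin p) ℝ) :=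
  {C | ∃ (σ : Equiv.Perm (Fin p)) (J D : Fin p → ℝ),
    (∀ i, J i = 1 ∨ J i = -1) ∧ (∀ i, 0 < D i) ∧
    C = permMat p σ * Matrix.diagonal J * Matrix.diagonal D}

noncomputable def Atilde {p : ℕ} (A : Matrix (Fin p) (Fin p) ℝ) : Matrix (Fin p) (Fin p) ℝ :=
  Matrix.of fun i j => (A i j) ^ 2 / ∑ k, (A i k) ^ 2

def offd {p : ℕ} (A : Matrix (Fin p) (Fin p) ℝ) : Matrix (Fin p) (Fin p) ℝ :=
  Matrix.of fun i j => if i = j then 0 else A i j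

lemma trace_permMat_mul (p : ℕ) (σ : Equiv.Perm (Fin p))
    (M : Matrix (Fin p) (Fin p) ℝ) :
    Matrix.trace (permMat p σ * M) = ∑ k, M k (σ k) := by
  simp only [Matrix.trace, Matrix.diag, Matrix.mul_apply, permMat, Matrix.of_apply]
  rw [Finset.sum_comm]
  refine Finset.sum_congr rfl fun k _ => ?_
  rw [Finset.sum_eq_single (σ k)]
  · simp
  · intro i _ hi; simp [Ne.symm hi]
  · simp

lemma B_apply {p : ℕ} (A : Matrix (Fin p) (Fin p) ℝ) (c : ℝ) (i j : Fin p) :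
    (1 + c • offd A) i j = if i = j then 1 else c * A i j := by
  by_cases h : i = j <;> simp [offd, Matrix.one_apply, h]

lemma rowsum_eq {p : ℕ} (A : Matrix (Fin p) (Fin p) ℝ) (c : ℝ) (i : Fin p) :
    ∑ k, ((1 + c • offd A) i k) ^ 2
      = c ^ 2 * (∑ j ∈ Finset.univ.erase i, (A i j) ^ 2) + 1 := by
  rw [← Finset.add_sum_erase _ _ (Finset.mem_univ i), B_apply]
  simp only [eq_self_iff_true, if_true, one_pow, Finset.mul_sum]
  rw [add_comm]
  congr 1
  refine Finset.sum_congr rfl fun j hj => ?_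
  rw [B_apply, if_neg (Ne.symm (Finset.ne_of_mem_erase hj))]
  ring

theorem stmt13 (p : ℕ) (hp : 2 ≤ p) (A : Matrix (Fin p) (Fin p) ℝ)
    (hA : ∀ i j, i ≠ j → (A i j) ^ 2 ≤ 1) (c : ℝ) (hc : c ∈ Set.Icc (0 : ℝ) 1) :
    Finset.univ.sup' Finset.univ_nonempty
      (fun σ : Equiv.Perm (Fin p) =>
        Matrix.trace (permMat p σ * Atilde (1 + c • offd A)))
      = ∑ i, 1 / (c ^ 2 * (∑ j ∈ Finset.univ.erase i, (A i j) ^ 2) + 1) := by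
  obtain ⟨hc0, hc1⟩ := hc
  have hS : ∀ i : Fin p, (0:ℝ) < c ^ 2 * (∑ j ∈ Finset.univ.erase i, (A i j) ^ 2) + 1 := by
    intro i
    have : (0:ℝ) ≤ c ^ 2 * (∑ j ∈ Finset.univ.erase i, (A i j) ^ 2) :=
      mul_nonneg (sq_nonneg c) (Finset.sum_nonneg fun j _ => sq_nonneg _)
    linarith
  have hval : ∀ σ : Equiv.Perm (Fin p),
      Matrix.trace (permMat p σ * Atilde (1 + c • offd A))
        = ∑ k, ((1 + c • offd A) k (σ k)) ^ 2
            / (c ^ 2 * (∑ j ∈ Finset.univ.erase k, (A k j) ^ 2) + 1) := by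
    intro σ
    rw [trace_permMat_mul]
    refine Finset.sum_congr rfl fun k _ => ?_
    simp only [Atilde, Matrix.of_apply, rowsum_eq]
  have hid : Matrix.trace (permMat p 1 * Atilde (1 + c • offd A))
      = ∑ i, 1 / (c ^ 2 * (∑ j ∈ Finset.univ.erase i, (A i j) ^ 2) + 1) := by
    rw [hval]
    refine Finset.sum_congr rfl fun k _ => ?_
    rw [B_apply]
    simp
  apply le_antisymm
  · apply Finset.sup'_le
    intro σ _
    rw [hval]
    refine Finset.sum_le_sum fun k _ => ?_
    rw [div_le_div_iff₀ (hS k) (hS k)]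
    have hnum : ((1 + c • offd A) k (σ k)) ^ 2 ≤ 1 := by
      rw [B_apply]
      by_cases h : k = σ k
      · rw [if_pos h]; norm_num
      · rw [if_neg h, mul_pow]
        calc c ^ 2 * A k (σ k) ^ 2 ≤ 1 * 1 := by
              apply mul_le_mul (by nlinarith) (hA k (σ k) h) (sq_nonneg _) zero_le_one
          _ = 1 := one_mul 1
    nlinarith [hS k]
  · rw [← hid]
    exact Finset.le_sup' (fun σ : Equiv.Perm (Fin p) =>
      Matrix.trace (permMat p σ * Atilde (1 + c • offd A))) (Finset.mem_univ 1)
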